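/- Asymptotics of the probability of all-real spectrum for a truncation: with L = cN, c > 0 fixed, log p_{N,N} = N²·(−c/4 − (1/4)log 2 − (c/2)log c − (3c²/4)log c − ((c+1)²/4)log(c+1) + (c+1/2)²log(c+1/2)) + O(N log N) as N → ∞, where p_{N,N} = ∏_{j=0}^{N−1} Γ(L+j)Γ((L+j)/2)/(Γ(L+(N+j−1)/2)Γ(L/2)). -/

import Mathlib

open Real Finset Filter Asymptotics

/-- `p_{N,N}` with `L = cN`:
`p_{N,N} = ∏_{j=0}^{N−1} Γ(L+j)Γ((L+j)/2)/(Γ(L+(N+j−1)/2)Γ(L/2))`. -/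
noncomputable def pNN (c : ℝ) (N : ℕ) : ℝ :=
  ∏ j ∈ Finset.range N,
    Real.Gamma (c * N + j) * Real.Gamma ((c * N + j) / 2) /
      (Real.Gamma (c * N + ((N : ℝ) + j - 1) / 2) * Real.Gamma (c * N / 2))

/-- The coefficient of `N²` in the asymptotic expansion of `log p_{N,N}`. -/
noncomputable def exponent (c : ℝ) : ℝ :=
  -c / 4 - (1 / 4) * Real.log 2 - (c / 2) * Real.log c - (3 * c ^ 2 / 4) * Real.log c -
    ((c + 1) ^ 2 / 4) * Real.log (c + 1) + (c + 1 / 2) ^ 2 * Real.log (c + 1 / 2)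

namespace RMAux

open Nat


/-- `f x = x log x - x`, the leading term of `log Γ`. -/
noncomputable def f (x : ℝ) : ℝ := x * Real.log x - x

/-- antiderivative of `f`. -/
noncomputable def F (x : ℝ) : ℝ := x ^ 2 / 2 * Real.log x - 3 / 4 * x ^ 2

lemma hasDerivAt_f {x : ℝ} (hx : 0 < x) : HasDerivAt f (Real.log x) x := by
  have h1 : HasDerivAt (fun x : ℝ => x * Real.log x) (Real.log x + 1) x := by
    have := (hasDerivAt_id' x).mul (Real.hasDerivAt_log hx.ne')
    rw [one_mul, mul_inv_cancel₀ hx.ne'] at this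
    exact this
  have := h1.sub (hasDerivAt_id' x)
  rw [add_sub_cancel_right] at this
  exact this

lemma hasDerivAt_F {x : ℝ} (hx : 0 < x) : HasDerivAt F (f x) x := by
  have h1 : HasDerivAt (fun x : ℝ => x ^ 2 / 2 * Real.log x)
      (x * Real.log x + x / 2) x := by
    have h2 : HasDerivAt (fun x : ℝ => x ^ 2 / 2) x x := by
      simpa using (hasDerivAt_pow 2 x).div_const 2
    have := h2.mul (Real.hasDerivAt_log hx.ne')
    refine this.congr_deriv ?_
    field_simp
  have h3 : HasDerivAt (fun x : ℝ => 3 / 4 * x ^ 2) (3 / 2 * x) x := by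
    have := (hasDerivAt_pow 2 x).const_mul (3 / 4 : ℝ)
    refine this.congr_deriv ?_
    ring
  have := h1.sub h3
  refine this.congr_deriv ?_
  simp [f]
  ring

/-- Lipschitz-type bound for `f` on `[L, R]` with `1 ≤ L`. -/
lemma f_diff_bound {L R x : ℝ} (hL : 1 ≤ L) (hx : x ∈ Set.Icc L R) :
    |f x - f L| ≤ Real.log R * (x - L) := by
  have hLR : L ≤ R := le_trans hx.1 hx.2
  have key : ∀ y ∈ Set.Icc L R, HasDerivWithinAt f (Real.log y) (Set.Icc L R) y :=
    fun y hy => (hasDerivAt_f (lt_of_lt_of_le one_pos (le_trans hL hy.1))).hasDerivWithinAt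
  have bound : ∀ y ∈ Set.Icc L R, ‖Real.log y‖ ≤ Real.log R := by
    intro y hy
    rw [Real.norm_eq_abs, abs_of_nonneg (Real.log_nonneg (le_trans hL hy.1))]
    exact Real.log_le_log (lt_of_lt_of_le one_pos (le_trans hL hy.1)) hy.2
  have := (convex_Icc L R).norm_image_sub_le_of_norm_hasDerivWithin_le key bound
    (Set.left_mem_Icc.2 hLR) hx
  rw [Real.norm_eq_abs, Real.norm_eq_abs, abs_of_nonneg (by linarith [hx.1] : (0:ℝ) ≤ x - L)] at this
  exact this

/-- One-step comparison between `f` and the increment of `F`. -/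
lemma step_bound {L s : ℝ} (hL : 1 ≤ L) (hs : 0 < s) (hs1 : s ≤ 1) :
    |F (L + s) - F L - s * f L| ≤ s * Real.log (L + s) := by
  set G : ℝ → ℝ := fun x => F x - f L * x with hG
  have key : ∀ y ∈ Set.Icc L (L + s), HasDerivWithinAt G (f y - f L) (Set.Icc L (L + s)) y := by
    intro y hy
    have hy0 : 0 < y := lt_of_lt_of_le one_pos (le_trans hL hy.1)
    exact ((hasDerivAt_F hy0).sub ((hasDerivAt_id y).const_mul (f L))).hasDerivWithinAt.congr_deriv
      (by ring)
  have bound : ∀ y ∈ Set.Icc L (L + s), ‖f y - f L‖ ≤ Real.log (L + s) * s := by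
    intro y hy
    rw [Real.norm_eq_abs]
    calc |f y - f L| ≤ Real.log (L + s) * (y - L) := f_diff_bound hL hy
      _ ≤ Real.log (L + s) * s := by
          have hlog : 0 ≤ Real.log (L + s) := Real.log_nonneg (by linarith)
          nlinarith [hy.2, hy.1]
  have := (convex_Icc L (L + s)).norm_image_sub_le_of_norm_hasDerivWithin_le key bound
    (Set.left_mem_Icc.2 (by linarith)) (Set.right_mem_Icc.2 (by linarith))
  rw [Real.norm_eq_abs, Real.norm_eq_abs] at this
  have h2 : G (L + s) - G L = F (L + s) - F L - s * f L := by simp [hG]; ring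
  rw [h2] at this
  have h3 : |L + s - L| = s := by rw [abs_of_nonneg (by linarith)]; ring_nf
  rw [h3] at this
  calc |F (L + s) - F L - s * f L| ≤ Real.log (L + s) * s * s := this
    _ ≤ s * Real.log (L + s) := by
        have hlog : 0 ≤ Real.log (L + s) := Real.log_nonneg (by linarith)
        have hss : s * s ≤ s := by nlinarith
        nlinarith [mul_le_mul_of_nonneg_left hss hlog]


/-- Sum vs. integral (closed form `F`). -/
lemma sum_bound (a s : ℝ) (ha : 1 ≤ a) (hs : 0 < s) (hs1 : s ≤ 1) (N : ℕ) :
    |(∑ j ∈ Finset.range N, f (a + s * j)) - (F (a + s * N) - F a) / s|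
      ≤ N * Real.log (a + s * N) := by
  have htel : (∑ j ∈ Finset.range N, (F (a + s * (j + 1)) - F (a + s * j)))
      = F (a + s * N) - F a := by
    have := Finset.sum_range_sub (fun j : ℕ => F (a + s * j)) N
    simpa [Nat.cast_add, Nat.cast_one] using this
  have key : |(∑ j ∈ Finset.range N, (s * f (a + s * j))) - (F (a + s * N) - F a)|
      ≤ N * (s * Real.log (a + s * N)) := by
    rw [← htel, ← Finset.sum_sub_distrib]
    calc |∑ j ∈ Finset.range N, (s * f (a + s * j) - (F (a + s * (j + 1)) - F (a + s * j)))|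
        ≤ ∑ j ∈ Finset.range N, |s * f (a + s * j) - (F (a + s * (j + 1)) - F (a + s * j))| :=
          Finset.abs_sum_le_sum_abs _ _
      _ ≤ ∑ j ∈ Finset.range N, (s * Real.log (a + s * N)) := by
          apply Finset.sum_le_sum
          intro j hj
          have hj' : (j : ℝ) + 1 ≤ N := by
            have := Finset.mem_range.mp hj
            exact_mod_cast Nat.succ_le_of_lt this
          have hjn : (0:ℝ) ≤ (j:ℝ) := Nat.cast_nonneg j
          have hL : 1 ≤ a + s * j := by nlinarith
          have h1 : |F ((a + s * j) + s) - F (a + s * j) - s * f (a + s * j)|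
              ≤ s * Real.log ((a + s * j) + s) := step_bound hL hs hs1
          have harg : (a + s * j) + s = a + s * (j + 1) := by ring
          rw [harg] at h1
          have hmono : Real.log (a + s * (j + 1)) ≤ Real.log (a + s * N) := by
            apply Real.log_le_log (by nlinarith)
            nlinarith
          calc |s * f (a + s * j) - (F (a + s * (j + 1)) - F (a + s * j))|
              = |F (a + s * (j + 1)) - F (a + s * j) - s * f (a + s * j)| := by
                rw [abs_sub_comm]
            _ ≤ s * Real.log (a + s * (j + 1)) := h1
            _ ≤ s * Real.log (a + s * N) := by nlinarith
      _ = N * (s * Real.log (a + s * N)) := by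
          rw [Finset.sum_const, Finset.card_range, nsmul_eq_mul]
  have hs' : s ≠ 0 := hs.ne'
  have heq : (∑ j ∈ Finset.range N, f (a + s * j)) - (F (a + s * N) - F a) / s
      = ((∑ j ∈ Finset.range N, (s * f (a + s * j))) - (F (a + s * N) - F a)) / s := by
    rw [← Finset.mul_sum]
    field_simp
  rw [heq, abs_div, abs_of_pos hs, div_le_iff₀ hs]
  calc |(∑ j ∈ Finset.range N, s * f (a + s * j)) - (F (a + s * N) - F a)|
      ≤ N * (s * Real.log (a + s * N)) := key
    _ = N * Real.log (a + s * N) * s := by ring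

/-- shifting the argument of `F` by `1/2` costs at most `x log x + x`. -/
lemma F_shift {x : ℝ} (hx : (3:ℝ)/2 ≤ x) : |F x - F (x - 1/2)| ≤ x * Real.log x + x := by
  have hx1 : (1:ℝ) ≤ x - 1/2 := by linarith
  have hxpos : (0:ℝ) < x := by linarith
  have hlog : 0 ≤ Real.log x := Real.log_nonneg (by linarith)
  have key : ∀ y ∈ Set.Icc (x - 1/2) x, HasDerivWithinAt F (f y) (Set.Icc (x - 1/2) x) y := by
    intro y hy
    exact (hasDerivAt_F (by linarith [hy.1])).hasDerivWithinAt
  have bound : ∀ y ∈ Set.Icc (x - 1/2) x, ‖f y‖ ≤ x * Real.log x + x := by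
    intro y hy
    have hy1 : (1:ℝ) ≤ y := le_trans hx1 hy.1
    have hylog : 0 ≤ Real.log y := Real.log_nonneg hy1
    have hylogx : Real.log y ≤ Real.log x := Real.log_le_log (by linarith) hy.2
    rw [Real.norm_eq_abs, abs_le]
    constructor
    · simp only [f]; nlinarith [hy.2]
    · simp only [f]; nlinarith [hy.2]
  have := (convex_Icc (x - 1/2) x).norm_image_sub_le_of_norm_hasDerivWithin_le key bound
    (Set.right_mem_Icc.2 (by linarith)) (Set.left_mem_Icc.2 (by linarith))
  rw [Real.norm_eq_abs, Real.norm_eq_abs, abs_sub_comm] at this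
  have h2 : |x - 1/2 - x| = 1/2 := by
    have : x - 1/2 - x = -(1/2) := by ring
    rw [this]; norm_num
  rw [h2] at this
  nlinarith [this]

lemma stirling_abs_bound : ∃ K : ℝ, 0 ≤ K ∧ ∀ n : ℕ, 1 ≤ n →
    |Real.log (Stirling.stirlingSeq n)| ≤ K := by
  obtain ⟨a, ha, hab⟩ := Stirling.stirlingSeq'_bounded_by_pos_constant
  refine ⟨max |Real.log a| |Real.log (Stirling.stirlingSeq 1)|, le_max_iff.2 (Or.inl (abs_nonneg _)), ?_⟩
  intro n hn
  obtain ⟨m, rfl⟩ := Nat.exists_eq_add_of_le hn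
  have hlo : a ≤ Stirling.stirlingSeq (1 + m) := by
    have := hab m; rwa [Nat.add_comm] at this
  have hhi : Stirling.stirlingSeq (1 + m) ≤ Stirling.stirlingSeq 1 := by
    have := Stirling.stirlingSeq'_antitone (Nat.zero_le m)
    simpa [Nat.add_comm] using this
  have hpos : 0 < Stirling.stirlingSeq (1 + m) := lt_of_lt_of_le ha hlo
  have h1 : Real.log a ≤ Real.log (Stirling.stirlingSeq (1 + m)) := Real.log_le_log ha hlo
  have h2 : Real.log (Stirling.stirlingSeq (1 + m)) ≤ Real.log (Stirling.stirlingSeq 1) :=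
    Real.log_le_log hpos hhi
  rw [abs_le]
  constructor
  · calc -(max |Real.log a| |Real.log (Stirling.stirlingSeq 1)|) ≤ -|Real.log a| := by
          simp [le_max_left]
      _ ≤ Real.log a := neg_abs_le _
      _ ≤ _ := h1
  · calc Real.log (Stirling.stirlingSeq (1 + m)) ≤ Real.log (Stirling.stirlingSeq 1) := h2
      _ ≤ |Real.log (Stirling.stirlingSeq 1)| := le_abs_self _
      _ ≤ _ := le_max_right _ _

lemma log_factorial_bound : ∃ C : ℝ, 0 ≤ C ∧ ∀ n : ℕ, 1 ≤ n →
    |Real.log (n !) - f n| ≤ C * (1 + Real.log n) := by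
  obtain ⟨K, hK0, hK⟩ := stirling_abs_bound
  refine ⟨K + 1, by linarith, ?_⟩
  intro n hn
  have hn0 : (0:ℝ) < n := by exact_mod_cast hn
  have hform := Stirling.log_stirlingSeq_formula n
  have hfn : (n : ℝ) * Real.log ((n : ℝ) / Real.exp 1) = f n := by
    rw [Real.log_div hn0.ne' (Real.exp_ne_zero 1), Real.log_exp]
    simp [f]; ring
  have heq : Real.log (n !) - f n
      = Real.log (Stirling.stirlingSeq n) + 1 / 2 * Real.log (2 * n) := by
    rw [← hfn]; linarith [hform]
  rw [heq]
  have hlogn : 0 ≤ Real.log n := Real.log_nonneg (by exact_mod_cast hn)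
  have hlog2n : Real.log (2 * (n:ℝ)) = Real.log 2 + Real.log n :=
    Real.log_mul two_ne_zero hn0.ne'
  have hlog2 : Real.log 2 ≤ 1 := by
    have := Real.log_le_sub_one_of_pos (by norm_num : (0:ℝ) < 2)
    linarith
  have h2 : 0 ≤ Real.log (2 * (n:ℝ)) := by rw [hlog2n]; positivity
  calc |Real.log (Stirling.stirlingSeq n) + 1 / 2 * Real.log (2 * n)|
      ≤ |Real.log (Stirling.stirlingSeq n)| + |1 / 2 * Real.log (2 * (n:ℝ))| := abs_add_le _ _
    _ ≤ K + (1 + Real.log n) := by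
        have := hK n hn
        rw [abs_of_nonneg (by linarith : (0:ℝ) ≤ 1/2 * Real.log (2 * (n:ℝ)))]
        rw [hlog2n]; linarith [this]
    _ ≤ (K + 1) * (1 + Real.log n) := by nlinarith

lemma log_gamma_bound : ∃ C : ℝ, 0 ≤ C ∧ ∀ x : ℝ, 2 ≤ x →
    |Real.log (Real.Gamma x) - f x| ≤ C * (1 + Real.log x) := by
  obtain ⟨C, hC0, hC⟩ := log_factorial_bound
  refine ⟨C + 2, by linarith, ?_⟩
  intro x hx
  have hx0 : (0:ℝ) < x := by linarith
  have hlogx : 0 ≤ Real.log x := Real.log_nonneg (by linarith)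
  set n := ⌊x⌋₊ with hn
  have hn2 : 2 ≤ n := Nat.le_floor (by exact_mod_cast hx)
  have hnx : (n:ℝ) ≤ x := Nat.floor_le hx0.le
  have hxn1 : x < n + 1 := Nat.lt_floor_add_one x
  have hn1 : 1 ≤ n - 1 := by omega
  have hcast : ((n - 1 : ℕ) : ℝ) = (n:ℝ) - 1 := by
    have : (1:ℕ) ≤ n := by omega
    push_cast [Nat.cast_sub this]
    ring
  -- Gamma monotonicity
  have hmono := Real.Gamma_strictMonoOn_Ici.monotoneOn
  have hmem_x : x ∈ Set.Ici (2:ℝ) := hx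
  have hmem_n : (n:ℝ) ∈ Set.Ici (2:ℝ) := by simp; exact_mod_cast hn2
  have hmem_n1 : (n:ℝ) + 1 ∈ Set.Ici (2:ℝ) := by
    simp only [Set.mem_Ici]
    have : (2:ℝ) ≤ n := by exact_mod_cast hn2
    linarith
  have hup : Real.Gamma x ≤ Real.Gamma ((n:ℝ) + 1) := hmono hmem_x hmem_n1 (by linarith)
  have hlo : Real.Gamma (n:ℝ) ≤ Real.Gamma x := hmono hmem_n hmem_x hnx
  have hGn1 : Real.Gamma ((n:ℝ) + 1) = (n ! : ℝ) := by
    exact_mod_cast Real.Gamma_nat_eq_factorial n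
  have hGn : Real.Gamma (n:ℝ) = ((n - 1)! : ℝ) := by
    have : ((n - 1 : ℕ) : ℝ) + 1 = (n:ℝ) := by rw [hcast]; ring
    rw [← this]
    exact_mod_cast Real.Gamma_nat_eq_factorial (n - 1)
  have hGpos : 0 < Real.Gamma x := Real.Gamma_pos_of_pos hx0
  have hfactpos : (0:ℝ) < ((n-1)! : ℝ) := by exact_mod_cast Nat.factorial_pos (n-1)
  -- log bounds
  have hlogup : Real.log (Real.Gamma x) ≤ Real.log (n ! : ℝ) := by
    rw [← hGn1]; exact Real.log_le_log hGpos hup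
  have hloglo : Real.log ((n-1)! : ℝ) ≤ Real.log (Real.Gamma x) := by
    rw [← hGn]; exact Real.log_le_log (hGn ▸ hfactpos) hlo
  -- f comparisons
  have h1n : (1:ℝ) ≤ (n:ℝ) := by exact_mod_cast Nat.one_le_iff_ne_zero.2 (by omega)
  have h2n : (2:ℝ) ≤ (n:ℝ) := by exact_mod_cast hn2
  have hfn : |f x - f (n:ℝ)| ≤ Real.log x := by
    have h := f_diff_bound (L := (n:ℝ)) (R := x) h1n ⟨hnx, le_refl x⟩
    nlinarith [h, hlogx]
  have hfn1 : |f x - f ((n:ℝ) - 1)| ≤ 2 * Real.log x := by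
    have h := f_diff_bound (L := (n:ℝ) - 1) (R := x) (by linarith) ⟨by linarith, le_refl x⟩
    nlinarith [h, hlogx]
  have hlognx : Real.log (n:ℝ) ≤ Real.log x := Real.log_le_log (by linarith) hnx
  have hlogn1x : Real.log ((n:ℝ) - 1) ≤ Real.log x := Real.log_le_log (by linarith) (by linarith)
  -- factorial bounds
  have hf1 := hC n (by omega)
  have hf2 := hC (n - 1) hn1
  rw [hcast] at hf2
  have hlogn1 : Real.log ((n - 1 : ℕ) : ℝ) = Real.log ((n:ℝ) - 1) := by rw [hcast]
  rw [abs_le] at hf1 hf2 hfn hfn1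
  have key1 := mul_le_mul_of_nonneg_left hlogn1x hC0
  have key2 := mul_le_mul_of_nonneg_left hlognx hC0
  have hexp : (C + 2) * (1 + Real.log x) = C + C * Real.log x + 2 + 2 * Real.log x := by ring
  have hexpn : C * (1 + Real.log ((n:ℝ) - 1)) = C + C * Real.log ((n:ℝ) - 1) := by ring
  have hexpn2 : C * (1 + Real.log (n:ℝ)) = C + C * Real.log (n:ℝ) := by ring
  rw [hexpn] at hf2
  rw [hexpn2] at hf1
  rw [abs_le, hexp]
  constructor
  · linarith [hf2.1, hfn1.2, hloglo, hlogx, key1]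
  · linarith [hf1.2, hfn.1, hlogup, hlogx, key2]


end RMAux

open RMAux Nat
lemma abs4 {x1 x2 x3 x4 K : ℝ} (e1 : |x1| ≤ K) (e2 : |x2| ≤ K) (e3 : |x3| ≤ K)
    (e4 : |x4| ≤ K) : |x1 + x2 - x3 - x4| ≤ 4 * K := by
  rw [abs_le] at e1 e2 e3 e4 ⊢
  constructor
  · linarith [e1.1, e2.1, e3.2, e4.2]
  · linarith [e1.2, e2.2, e3.1, e4.1]

set_option maxHeartbeats 2000000 in
/-- With `L = cN`, `c > 0` fixed, `log p_{N,N} = N² exponent(c) + O(N log N)` as `N → ∞`. -/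
theorem log_pNN_asymptotics (c : ℝ) (hc : 0 < c) :
    (fun N : ℕ => Real.log (pNN c N) - (N : ℝ) ^ 2 * exponent c)
      =O[Filter.atTop] (fun N : ℕ => (N : ℝ) * Real.log N) := by
  obtain ⟨C, hC0, hC⟩ := log_gamma_bound
  set M : ℝ := Real.log (c + 1) + 1 with hM
  have hM1 : 1 ≤ M := by
    have : 0 ≤ Real.log (c + 1) := Real.log_nonneg (by linarith)
    simp [hM]; linarith
  rw [isBigO_iff]
  refine ⟨4 * C * (1 + M) + 3 * M + 4 * (c + 1) * (M + 1), ?_⟩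
  have hcN : Tendsto (fun N : ℕ => c * (N:ℝ)) atTop atTop :=
    Tendsto.const_mul_atTop hc tendsto_natCast_atTop_atTop
  filter_upwards [eventually_ge_atTop 3, hcN.eventually_ge_atTop 4] with N hN3 hcn4
  -- basic facts
  have hn3 : (3:ℝ) ≤ (N:ℝ) := by exact_mod_cast hN3
  have hn0 : (0:ℝ) < (N:ℝ) := by linarith
  have hn1 : (1:ℝ) ≤ (N:ℝ) := by linarith
  have hlogn1 : (1:ℝ) ≤ Real.log N := by
    rw [Real.le_log_iff_exp_le hn0]
    calc Real.exp 1 ≤ Real.exp 1 := le_refl _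
      _ ≤ 3 := by linarith [Real.exp_one_lt_d9]
      _ ≤ (N:ℝ) := hn3
  have hlogn0 : (0:ℝ) ≤ Real.log N := by linarith
  have hcn2 : (2:ℝ) ≤ c * N := by linarith
  have hcn2' : (2:ℝ) ≤ c * N / 2 := by linarith
  have hc1 : (0:ℝ) < c + 1 := by linarith
  -- log bound against M * log N
  have hlogM : ∀ x : ℝ, 0 < x → x ≤ (c + 1) * N → Real.log x ≤ M * Real.log N := by
    intro x hx hxle
    calc Real.log x ≤ Real.log ((c + 1) * N) := Real.log_le_log hx hxle
      _ = Real.log (c + 1) + Real.log N := Real.log_mul hc1.ne' hn0.ne'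
      _ ≤ M * Real.log N := by
          have h0 : 0 ≤ Real.log (c + 1) := Real.log_nonneg (by linarith)
          nlinarith
  -- Gamma vs f bound
  have hbnd : ∀ x : ℝ, 2 ≤ x → x ≤ (c + 1) * N →
      |Real.log (Real.Gamma x) - f x| ≤ C * (1 + M) * Real.log N := by
    intro x hx hxle
    calc |Real.log (Real.Gamma x) - f x| ≤ C * (1 + Real.log x) := hC x hx
      _ ≤ C * (1 + M * Real.log N) := by
          have := hlogM x (by linarith) hxle
          nlinarith
      _ ≤ C * (1 + M) * Real.log N := by nlinarith
  -- positivity and range of the four Gamma arguments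
  have hargA : ∀ j ∈ Finset.range N, (2:ℝ) ≤ c * N + j ∧ c * N + j ≤ (c + 1) * N := by
    intro j hj
    have hj' : (j:ℝ) ≤ (N:ℝ) - 1 := by
      have := Finset.mem_range.mp hj
      have : (j:ℝ) + 1 ≤ N := by exact_mod_cast Nat.succ_le_of_lt this
      linarith
    have hj0 : (0:ℝ) ≤ (j:ℝ) := Nat.cast_nonneg j
    constructor <;> nlinarith
  have hargB : ∀ j ∈ Finset.range N, (2:ℝ) ≤ (c * N + j) / 2 ∧ (c * N + j) / 2 ≤ (c + 1) * N := by
    intro j hj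
    obtain ⟨h1, h2⟩ := hargA j hj
    constructor
    · linarith
    · nlinarith
  have hargC : ∀ j ∈ Finset.range N,
      (2:ℝ) ≤ c * N + ((N:ℝ) + j - 1) / 2 ∧ c * N + ((N:ℝ) + j - 1) / 2 ≤ (c + 1) * N := by
    intro j hj
    have hj' : (j:ℝ) ≤ (N:ℝ) - 1 := by
      have := Finset.mem_range.mp hj
      have : (j:ℝ) + 1 ≤ N := by exact_mod_cast Nat.succ_le_of_lt this
      linarith
    have hj0 : (0:ℝ) ≤ (j:ℝ) := Nat.cast_nonneg j
    constructor <;> nlinarith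
  have hargD : (2:ℝ) ≤ c * N / 2 ∧ c * N / 2 ≤ (c + 1) * N := by
    constructor
    · linarith
    · nlinarith
  -- expand the logarithm of the product
  have hlog_pNN : Real.log (pNN c N) = ∑ j ∈ Finset.range N,
      (Real.log (Real.Gamma (c * N + j)) + Real.log (Real.Gamma ((c * N + j) / 2))
        - Real.log (Real.Gamma (c * N + ((N:ℝ) + j - 1) / 2))
        - Real.log (Real.Gamma (c * N / 2))) := by
    have hpos : ∀ j ∈ Finset.range N,
        0 < Real.Gamma (c * N + j) ∧ 0 < Real.Gamma ((c * N + j) / 2)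
          ∧ 0 < Real.Gamma (c * N + ((N:ℝ) + j - 1) / 2) ∧ 0 < Real.Gamma (c * N / 2) := by
      intro j hj
      obtain ⟨a1, _⟩ := hargA j hj
      obtain ⟨b1, _⟩ := hargB j hj
      obtain ⟨c1, _⟩ := hargC j hj
      exact ⟨Real.Gamma_pos_of_pos (by linarith), Real.Gamma_pos_of_pos (by linarith),
        Real.Gamma_pos_of_pos (by linarith), Real.Gamma_pos_of_pos (by linarith)⟩
    rw [pNN, Real.log_prod]
    · apply Finset.sum_congr rfl
      intro j hj
      obtain ⟨p1, p2, p3, p4⟩ := hpos j hj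
      rw [Real.log_div (by positivity) (by positivity), Real.log_mul p1.ne' p2.ne',
        Real.log_mul p3.ne' p4.ne']
      ring
    · intro j hj
      obtain ⟨p1, p2, p3, p4⟩ := hpos j hj
      positivity
  -- S : the f-approximation of log pNN
  set S : ℝ := ∑ j ∈ Finset.range N,
      (f (c * N + j) + f ((c * N + j) / 2) - f (c * N + ((N:ℝ) + j - 1) / 2) - f (c * N / 2))
    with hS
  have h1 : |Real.log (pNN c N) - S| ≤ 4 * C * (1 + M) * ((N:ℝ) * Real.log N) := by
    rw [hlog_pNN, hS, ← Finset.sum_sub_distrib]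
    refine le_trans (Finset.abs_sum_le_sum_abs _ _) ?_
    have hsum : ∑ j ∈ Finset.range N,
        |Real.log (Real.Gamma (c * N + j)) + Real.log (Real.Gamma ((c * N + j) / 2))
          - Real.log (Real.Gamma (c * N + ((N:ℝ) + j - 1) / 2)) - Real.log (Real.Gamma (c * N / 2))
          - (f (c * N + j) + f ((c * N + j) / 2) - f (c * N + ((N:ℝ) + j - 1) / 2) - f (c * N / 2))|
        ≤ ∑ _j ∈ Finset.range N, (4 * (C * (1 + M) * Real.log N)) := by
      refine Finset.sum_le_sum ?_
      intro j hj
      obtain ⟨a1, a2⟩ := hargA j hj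
      obtain ⟨b1, b2⟩ := hargB j hj
      obtain ⟨c1, c2⟩ := hargC j hj
      obtain ⟨d1, d2⟩ := hargD
      have e1 := hbnd _ a1 a2
      have e2 := hbnd _ b1 b2
      have e3 := hbnd _ c1 c2
      have e4 := hbnd _ d1 d2
      have hre : ∀ a b c' d p q r s' : ℝ,
          a + b - c' - d - (p + q - r - s') = (a - p) + (b - q) - (c' - r) - (d - s') := by
        intros; ring
      rw [hre]
      exact abs4 e1 e2 e3 e4
    refine le_trans hsum (le_of_eq ?_)
    rw [Finset.sum_const, Finset.card_range, nsmul_eq_mul]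
    ring
  -- split S
  have hS_split : S = (∑ j ∈ Finset.range N, f (c * N + j))
      + (∑ j ∈ Finset.range N, f ((c * N + j) / 2))
      - (∑ j ∈ Finset.range N, f (c * N + ((N:ℝ) + j - 1) / 2))
      - (N:ℝ) * f (c * N / 2) := by
    rw [hS, Finset.sum_sub_distrib, Finset.sum_sub_distrib, Finset.sum_add_distrib,
      Finset.sum_const, Finset.card_range, nsmul_eq_mul]
  -- sum 1
  have h2 : |(∑ j ∈ Finset.range N, f (c * N + j)) - (F ((c + 1) * N) - F (c * N))|
      ≤ M * ((N:ℝ) * Real.log N) := by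
    have h := sum_bound (c * N) 1 (by linarith) one_pos le_rfl N
    simp only [one_mul, div_one] at h
    rw [show c * (N:ℝ) + (N:ℝ) = (c + 1) * (N:ℝ) from by ring] at h
    refine le_trans h ?_
    have := hlogM ((c + 1) * N) (by positivity) le_rfl
    nlinarith
  -- sum 2
  have h3 : |(∑ j ∈ Finset.range N, f ((c * N + j) / 2))
      - 2 * (F ((c + 1) * N / 2) - F (c * N / 2))| ≤ M * ((N:ℝ) * Real.log N) := by
    have h := sum_bound (c * N / 2) (1 / 2) (by linarith) (by norm_num) (by norm_num) N
    have hsumeq : (∑ j ∈ Finset.range N, f (c * N / 2 + 1 / 2 * j))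
        = ∑ j ∈ Finset.range N, f ((c * N + j) / 2) :=
      Finset.sum_congr rfl fun j _ => congrArg f (by ring)
    rw [hsumeq, show c * (N:ℝ) / 2 + 1 / 2 * (N:ℝ) = (c + 1) * (N:ℝ) / 2 from by ring,
      div_div_eq_mul_div, show (F ((c + 1) * (N:ℝ) / 2) - F (c * (N:ℝ) / 2)) * 2 / 1
        = 2 * (F ((c + 1) * (N:ℝ) / 2) - F (c * (N:ℝ) / 2)) from by ring] at h
    refine le_trans h ?_
    have := hlogM ((c + 1) * (N:ℝ) / 2) (by positivity) (by nlinarith)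
    nlinarith
  -- sum 3
  have h4 : |(∑ j ∈ Finset.range N, f (c * N + ((N:ℝ) + j - 1) / 2))
      - 2 * (F ((c + 1) * N - 1 / 2) - F ((c + 1 / 2) * N - 1 / 2))|
      ≤ M * ((N:ℝ) * Real.log N) := by
    have h := sum_bound (c * N + ((N:ℝ) - 1) / 2) (1 / 2) (by nlinarith) (by norm_num)
      (by norm_num) N
    have hsumeq : (∑ j ∈ Finset.range N, f (c * N + ((N:ℝ) - 1) / 2 + 1 / 2 * j))
        = ∑ j ∈ Finset.range N, f (c * N + ((N:ℝ) + j - 1) / 2) :=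
      Finset.sum_congr rfl fun j _ => congrArg f (by ring)
    rw [hsumeq, show c * (N:ℝ) + ((N:ℝ) - 1) / 2 + 1 / 2 * (N:ℝ) = (c + 1) * (N:ℝ) - 1 / 2
        from by ring, show c * (N:ℝ) + ((N:ℝ) - 1) / 2 = (c + 1 / 2) * (N:ℝ) - 1 / 2
        from by ring, div_div_eq_mul_div,
      show (F ((c + 1) * (N:ℝ) - 1 / 2) - F ((c + 1 / 2) * (N:ℝ) - 1 / 2)) * 2 / 1
        = 2 * (F ((c + 1) * (N:ℝ) - 1 / 2) - F ((c + 1 / 2) * (N:ℝ) - 1 / 2)) from by ring] at h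
    refine le_trans h ?_
    have := hlogM ((c + 1) * (N:ℝ) - 1 / 2) (by nlinarith) (by nlinarith)
    nlinarith
  -- shifts
  have h5 : |F ((c + 1) * (N:ℝ)) - F ((c + 1) * (N:ℝ) - 1 / 2)|
      ≤ (c + 1) * (M + 1) * ((N:ℝ) * Real.log N) := by
    have h := F_shift (x := (c + 1) * (N:ℝ)) (by nlinarith)
    refine le_trans h ?_
    have hl := hlogM ((c + 1) * (N:ℝ)) (by positivity) le_rfl
    have hx0 : (0:ℝ) < (c + 1) * (N:ℝ) := by positivity
    nlinarith
  have h6 : |F ((c + 1 / 2) * (N:ℝ)) - F ((c + 1 / 2) * (N:ℝ) - 1 / 2)|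
      ≤ (c + 1) * (M + 1) * ((N:ℝ) * Real.log N) := by
    have h := F_shift (x := (c + 1 / 2) * (N:ℝ)) (by nlinarith)
    refine le_trans h ?_
    have hx0 : (0:ℝ) < (c + 1 / 2) * (N:ℝ) := by positivity
    have hl := hlogM ((c + 1 / 2) * (N:ℝ)) hx0 (by nlinarith)
    have hlx0 : (0:ℝ) ≤ Real.log ((c + 1 / 2) * (N:ℝ)) := Real.log_nonneg (by nlinarith)
    nlinarith
  -- the exact identity
  have hT : (F ((c + 1) * (N:ℝ)) - F (c * (N:ℝ)))
      + 2 * (F ((c + 1) * (N:ℝ) / 2) - F (c * (N:ℝ) / 2))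
      - 2 * (F ((c + 1) * (N:ℝ)) - F ((c + 1 / 2) * (N:ℝ)))
      - (N:ℝ) * f (c * (N:ℝ) / 2) = (N:ℝ) ^ 2 * exponent c := by
    have hc12 : c + 1 / 2 ≠ 0 := by positivity
    have l1 : Real.log (c * (N:ℝ)) = Real.log c + Real.log N := Real.log_mul hc.ne' hn0.ne'
    have l2 : Real.log ((c + 1) * (N:ℝ)) = Real.log (c + 1) + Real.log N :=
      Real.log_mul hc1.ne' hn0.ne'
    have l3 : Real.log ((c + 1 / 2) * (N:ℝ)) = Real.log (c + 1 / 2) + Real.log N :=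
      Real.log_mul hc12 hn0.ne'
    have l4 : Real.log (c * (N:ℝ) / 2) = Real.log c + Real.log N - Real.log 2 := by
      rw [Real.log_div (by positivity) two_ne_zero, l1]
    have l5 : Real.log ((c + 1) * (N:ℝ) / 2) = Real.log (c + 1) + Real.log N - Real.log 2 := by
      rw [Real.log_div (by positivity) two_ne_zero, l2]
    simp only [F, f, exponent, l1, l2, l3, l4, l5]
    ring
  -- assemble
  have hid : Real.log (pNN c N) - (N:ℝ) ^ 2 * exponent c
      = (Real.log (pNN c N) - S)
        + ((∑ j ∈ Finset.range N, f (c * N + j)) - (F ((c + 1) * N) - F (c * N)))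
        + ((∑ j ∈ Finset.range N, f ((c * N + j) / 2))
            - 2 * (F ((c + 1) * N / 2) - F (c * N / 2)))
        - ((∑ j ∈ Finset.range N, f (c * N + ((N:ℝ) + j - 1) / 2))
            - 2 * (F ((c + 1) * N - 1 / 2) - F ((c + 1 / 2) * N - 1 / 2)))
        + 2 * (F ((c + 1) * N) - F ((c + 1) * N - 1 / 2))
        - 2 * (F ((c + 1 / 2) * N) - F ((c + 1 / 2) * N - 1 / 2)) := by
    rw [← hT, hS_split]
    ring
  rw [Real.norm_eq_abs, Real.norm_eq_abs, hid,
    abs_of_nonneg (mul_nonneg hn0.le hlogn0)]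
  set P : ℝ := (N:ℝ) * Real.log N with hP
  set x0 : ℝ := Real.log (pNN c N) - S with hx0
  set x1 : ℝ := (∑ j ∈ Finset.range N, f (c * N + j)) - (F ((c + 1) * N) - F (c * N)) with hx1
  set x2 : ℝ := (∑ j ∈ Finset.range N, f ((c * N + j) / 2))
      - 2 * (F ((c + 1) * N / 2) - F (c * N / 2)) with hx2
  set x3 : ℝ := (∑ j ∈ Finset.range N, f (c * N + ((N:ℝ) + j - 1) / 2))
      - 2 * (F ((c + 1) * N - 1 / 2) - F ((c + 1 / 2) * N - 1 / 2)) with hx3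
  set x5 : ℝ := F ((c + 1) * N) - F ((c + 1) * N - 1 / 2) with hx5
  set x6 : ℝ := F ((c + 1 / 2) * N) - F ((c + 1 / 2) * N - 1 / 2) with hx6
  rw [abs_le] at h1 h2 h3 h4 h5 h6
  rw [abs_le]
  constructor
  · linarith [h1.1, h2.1, h3.1, h4.2, h5.1, h5.2, h6.1, h6.2]
  · linarith [h1.2, h2.2, h3.2, h4.1, h5.1, h5.2, h6.1, h6.2]
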